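/- For the golden mean shift X_G, the independence entropy h_ind(X_G), defined as lim_{n→∞} (1/n) · max{ Σ_{i=1}^n log|A_i| : A_1...A_n independently legal for X_G }, equals (1/2)·log 2. -/

import Mathlib

open Filter

/-- A finite word over `{0,1}` (encoded as `Bool`, with `true` = 1) is in the language of
the golden mean shift iff it contains no two consecutive 1s. -/
def gmLegal {n : ℕ} (w : Fin n → Bool) : Prop :=
  ∀ i j : Fin n, (i : ℕ) + 1 = (j : ℕ) → ¬(w i = true ∧ w j = true)

/-- A string `A_1 … A_n` of nonempty subsets of `{0,1}` is independently legal for the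
golden mean shift if every selection `a_i ∈ A_i` yields a word in the language. -/
def gmIndepLegal {n : ℕ} (A : Fin n → Finset Bool) : Prop :=
  (∀ i, (A i).Nonempty) ∧ ∀ w : Fin n → Bool, (∀ i, w i ∈ A i) → gmLegal w

/-- The maximal independence score of independently legal strings of length `n`. -/
noncomputable def gmMaxScore (n : ℕ) : ℝ :=
  sSup {r : ℝ | ∃ A : Fin n → Finset Bool, gmIndepLegal A ∧
    r = ∑ i, Real.log ((A i).card)}

lemma card2_univ {A : Finset Bool} (h : A.card = 2) : A = Finset.univ := by
  apply Finset.eq_univ_of_card; simp [h]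

lemma not_adj {n : ℕ} {A : Fin n → Finset Bool} (hA : gmIndepLegal A)
    {i j : Fin n} (hij : (i : ℕ) + 1 = (j : ℕ))
    (h1 : (A i).card = 2) (h2 : (A j).card = 2) : False := by
  classical
  set w : Fin n → Bool := fun k => if k = i ∨ k = j then true else (hA.1 k).choose with hw
  have hmem : ∀ k, w k ∈ A k := by
    intro k
    by_cases h : k = i ∨ k = j
    · rcases h with rfl | rfl
      · simp only [hw, if_pos (Or.inl rfl)]
        rw [card2_univ h1]; exact Finset.mem_univ _
      · simp only [hw, if_pos (Or.inr rfl)]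
        rw [card2_univ h2]; exact Finset.mem_univ _
    · simp only [hw, if_neg h]
      exact (hA.1 k).choose_spec
  exact hA.2 w hmem i j hij
    ⟨by simp only [hw, if_pos (Or.inl rfl)], by simp only [hw, if_pos (Or.inr rfl)]⟩

lemma score_le {n : ℕ} {A : Fin n → Finset Bool} (hA : gmIndepLegal A) :
    ∑ i, Real.log ((A i).card) ≤ ((n + 1) / 2 : ℕ) * Real.log 2 := by
  classical
  have hcard_le : ∀ i, (A i).card ≤ 2 := by
    intro i
    simpa using Finset.card_le_card (Finset.subset_univ (A i))
  have h1 : ∑ i ∈ Finset.univ.filter (fun i => (A i).card = 2), Real.log ((A i).card)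
      = (Finset.univ.filter (fun i : Fin n => (A i).card = 2)).card * Real.log 2 := by
    rw [Finset.sum_congr rfl (fun i hi => ?_), Finset.sum_const, nsmul_eq_mul]
    rw [Finset.mem_filter] at hi
    rw [hi.2]; norm_num
  have h2 : ∑ i ∈ Finset.univ.filter (fun i => ¬(A i).card = 2),
      Real.log ((A i).card) = 0 := by
    apply Finset.sum_eq_zero
    intro i hi
    rw [Finset.mem_filter] at hi
    have hc1 : 1 ≤ (A i).card := Finset.card_pos.mpr (hA.1 i)
    have hc : (A i).card = 1 := by
      have := hcard_le i
      have := hi.2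
      omega
    rw [hc]; norm_num
  have hsum : ∑ i, Real.log ((A i).card)
      = (Finset.univ.filter (fun i : Fin n => (A i).card = 2)).card * Real.log 2 := by
    rw [← Finset.sum_filter_add_sum_filter_not Finset.univ (fun i => (A i).card = 2), h1, h2,
      add_zero]
  rw [hsum]
  have hScard : (Finset.univ.filter (fun i : Fin n => (A i).card = 2)).card ≤ (n + 1) / 2 := by
    have := Finset.card_le_card_of_injOn (fun i : Fin n => (i : ℕ) / 2)
      (s := Finset.univ.filter (fun i : Fin n => (A i).card = 2))
      (t := Finset.range ((n + 1) / 2))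
      (fun i _ => by
        simp only [Finset.mem_coe, Finset.mem_range]
        have := i.is_lt
        omega)
      ?_
    · simpa using this
    · intro i hi j hj hij
      by_contra hne
      have hij' : (i : ℕ) + 1 = (j : ℕ) ∨ (j : ℕ) + 1 = (i : ℕ) := by
        have : (i : ℕ) ≠ (j : ℕ) := fun h => hne (Fin.ext h)
        simp only at hij
        omega
      rw [Finset.mem_coe, Finset.mem_filter] at hi hj
      rcases hij' with h | h
      · exact not_adj hA h hi.2 hj.2
      · exact not_adj hA h hj.2 hi.2
  apply mul_le_mul_of_nonneg_right _ (Real.log_nonneg (by norm_num))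
  exact_mod_cast hScard

lemma range_sum (n : ℕ) :
    ∑ i ∈ Finset.range n, (if i % 2 = 0 then Real.log 2 else 0)
      = ((n + 1) / 2 : ℕ) * Real.log 2 := by
  induction n with
  | zero => simp
  | succ n ih =>
    rw [Finset.sum_range_succ, ih]
    by_cases h : n % 2 = 0
    · have h2 : (n + 1 + 1) / 2 = (n + 1) / 2 + 1 := by omega
      rw [if_pos h, h2]; push_cast; ring
    · have h2 : (n + 1 + 1) / 2 = (n + 1) / 2 := by omega
      rw [if_neg h, h2, add_zero]

lemma score_achieved (n : ℕ) :
    ∃ A : Fin n → Finset Bool, gmIndepLegal A ∧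
      (((n + 1) / 2 : ℕ) : ℝ) * Real.log 2 = ∑ i, Real.log ((A i).card) := by
  classical
  refine ⟨fun i => if (i : ℕ) % 2 = 0 then Finset.univ else {false}, ⟨?_, ?_⟩, ?_⟩
  · intro i
    by_cases h : (i : ℕ) % 2 = 0 <;> simp [h]
  · intro w hw i j hij
    rintro ⟨hwi, hwj⟩
    by_cases h : (i : ℕ) % 2 = 0
    · have hj : ¬ (j : ℕ) % 2 = 0 := by omega
      have := hw j
      simp only [if_neg hj, Finset.mem_singleton] at this
      rw [this] at hwj; exact Bool.false_ne_true hwj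
    · have := hw i
      simp only [if_neg h, Finset.mem_singleton] at this
      rw [this] at hwi; exact Bool.false_ne_true hwi
  · symm
    calc ∑ i : Fin n, Real.log (((if (i : ℕ) % 2 = 0 then (Finset.univ : Finset Bool)
            else {false}).card : ℕ))
        = ∑ i : Fin n, (if (i : ℕ) % 2 = 0 then Real.log 2 else 0) :=
          Finset.sum_congr rfl (fun i _ => by by_cases h : (i : ℕ) % 2 = 0 <;> simp [h])
      _ = ∑ i ∈ Finset.range n, (if i % 2 = 0 then Real.log 2 else 0) :=
          by exact Fin.sum_univ_eq_sum_range (fun i => if i % 2 = 0 then Real.log 2 else 0) n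
      _ = _ := range_sum n

lemma gmMaxScore_eq (n : ℕ) :
    gmMaxScore n = ((n + 1) / 2 : ℕ) * Real.log 2 := by
  obtain ⟨A, hA, hval⟩ := score_achieved n
  have hub : ∀ r ∈ {r : ℝ | ∃ A : Fin n → Finset Bool, gmIndepLegal A ∧
      r = ∑ i, Real.log ((A i).card)}, r ≤ ((n + 1) / 2 : ℕ) * Real.log 2 := by
    rintro r ⟨B, hB, rfl⟩; exact score_le hB
  apply le_antisymm
  · exact csSup_le ⟨_, A, hA, hval⟩ hub
  · exact le_csSup ⟨_, hub⟩ ⟨A, hA, hval⟩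

/-- The independence entropy of the golden mean shift, i.e. the limit of
`(1/n) · max{ Σ log|A_i| : A_1…A_n independently legal }`, equals `(1/2)·log 2`. -/
theorem stmt1 :
    Tendsto (fun n : ℕ => gmMaxScore n / n) atTop (nhds (Real.log 2 / 2)) := by
  have key : ∀ n : ℕ, gmMaxScore n / n = (((n + 1) / 2 : ℕ) : ℝ) / n * Real.log 2 := by
    intro n; rw [gmMaxScore_eq]; ring
  simp only [key]
  have hhalf : Tendsto (fun n : ℕ => (((n + 1) / 2 : ℕ) : ℝ) / n) atTop (nhds (1 / 2)) := by
    apply tendsto_of_tendsto_of_tendsto_of_le_of_le' (g := fun _ : ℕ => (1 : ℝ) / 2)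
      (h := fun n : ℕ => 1 / 2 + 1 / (n : ℝ)) tendsto_const_nhds
    · simpa using (tendsto_const_nhds : Tendsto (fun _ : ℕ => (1 / 2 : ℝ)) atTop (nhds (1 / 2))).add
        (tendsto_one_div_atTop_nhds_zero_nat : Tendsto (fun n : ℕ => 1 / (n : ℝ)) atTop (nhds 0))
    · filter_upwards [eventually_ge_atTop 1] with n hn
      have hn' : (0 : ℝ) < n := by positivity
      rw [div_le_div_iff₀ (by norm_num) hn', one_mul]
      have : n ≤ 2 * ((n + 1) / 2) := by omega
      push_cast
      exact_mod_cast by push_cast; nlinarith [this]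
    · filter_upwards [eventually_ge_atTop 1] with n hn
      have hn' : (0 : ℝ) < n := by positivity
      rw [div_add_div _ _ (by norm_num) (ne_of_gt hn'), div_le_div_iff₀ hn' (by positivity)]
      have : 2 * ((n + 1) / 2) ≤ n + 2 := by omega
      have hc : ((((n + 1) / 2 : ℕ)) : ℝ) * 2 ≤ (n : ℝ) + 2 := by exact_mod_cast by omega
      nlinarith [hc]
  have := hhalf.mul_const (Real.log 2)
  simpa [div_eq_mul_inv, mul_comm] using this
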